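/- For an even integer m > 0, select the poles p_k = r_k e^{iθ_k}, k ∈ {1,...,m/2}, with θ_k = 2√(πk), r_k = √(k/(m/2+1)), along the Archimedes spiral r = c_mθ with c_m = 1/(2√(π(m+2)/2)). Then for any z in the open unit disk, there exists k ∈ {1,...,m/2} such that |z − p_k| < 4πc_m and either |p_k| ≤ |z| or k = 1. -/

import Mathlib

lemma abs_polar_sub (x y α β : ℝ) :
    (‖(x:ℂ) * Complex.exp (Complex.I * α) - (y:ℂ) * Complex.exp (Complex.I * β)‖)^2
      = (x - y)^2 + 2*x*y*(1 - Real.cos (α - β)) := by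
  rw [Complex.sq_norm]
  rw [mul_comm Complex.I (α:ℂ), mul_comm Complex.I (β:ℂ), Complex.exp_mul_I, Complex.exp_mul_I]
  rw [← Complex.ofReal_cos, ← Complex.ofReal_sin, ← Complex.ofReal_cos, ← Complex.ofReal_sin]
  simp only [Complex.normSq_apply, Complex.add_re, Complex.add_im, Complex.mul_re, Complex.mul_im,
    Complex.sub_re, Complex.sub_im, Complex.ofReal_re, Complex.ofReal_im, Complex.I_re,
    Complex.I_im]
  rw [Real.cos_sub]
  linear_combination (x^2) * Real.sin_sq_add_cos_sq α + (y^2) * Real.sin_sq_add_cos_sq β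

lemma cos_lb {x : ℝ} (h0 : 0 ≤ x) (h2 : x ≤ 2) :
    1 - Real.cos x ≤ x^2/2 - 7*x^4/384 := by
  have hy1 : x/2 ≤ 1 := by linarith
  have hy0 : 0 ≤ x/2 := by linarith
  have hsq : (x/2)^2 ≤ 1 := by nlinarith
  have hq : (x/2)^4 ≤ 1 := by nlinarith
  have hy : |x/2| ≤ 1 := by rw [abs_of_nonneg hy0]; linarith
  have hb := Real.cos_bound hy
  rw [abs_of_nonneg hy0] at hb
  have hL : 1 - (x/2)^2/2 - (x/2)^4*(5/96) ≤ Real.cos (x/2) := by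
    have := abs_sub_le_iff.1 hb
    linarith [this.2]
  have hLnn : 0 ≤ 1 - (x/2)^2/2 - (x/2)^4*(5/96) := by nlinarith
  have hcx : Real.cos x = 2 * Real.cos (x/2)^2 - 1 := by
    have := Real.cos_two_mul (x/2)
    rw [show 2*(x/2) = x by ring] at this
    linarith
  nlinarith [hL, hLnn, sq_nonneg ((x/2)^2*(x/2)), sq_nonneg ((x/2)^2)]


lemma step9 {A Δ d : ℝ} (hA : 0 ≤ A) (hΔ0 : 0 ≤ Δ) (hΔ : Δ ≤ 2*d) (hd : d ≤ 1) :
    Δ^2 + A*(Δ^2/2 - 7*Δ^4/384) ≤ (2*d)^2 + A*((2*d)^2/2 - 7*(2*d)^4/384) := by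
  have hd0 : 0 ≤ d := by linarith
  have h1 : 0 ≤ 4*d^2 - Δ^2 := by nlinarith
  have h2 : 0 ≤ (1 + A/2) - (7*A/384)*(4*d^2 + Δ^2) := by
    nlinarith [mul_nonneg hA h1, mul_nonneg hA (by nlinarith : (0:ℝ) ≤ 1 - d^2)]
  nlinarith [mul_nonneg h1 h2]

lemma step10 {d P : ℝ} (hd0 : 0 ≤ d) (hd : d ≤ 1) (hP : 3 ≤ P) :
    4*d^2 + 4*(P^2 - d^4) - (7/12)*d^2*(P^2 - d^4) ≤ 4*P^2 := by
  have h1 : 0 ≤ d^2 := sq_nonneg d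
  have h9 : (9:ℝ) ≤ P^2 := by nlinarith
  have h2 : 9*d^2 ≤ P^2*d^2 := by nlinarith [mul_le_mul_of_nonneg_right h9 h1]
  have h3 : d^6 ≤ d^4 := by nlinarith [mul_nonneg (mul_nonneg h1 h1) (by nlinarith : (0:ℝ) ≤ 1 - d^2)]
  nlinarith

lemma keyB {a b θ : ℝ} (ha : Real.sqrt Real.pi ≤ a) (hab : a < b)
    (h2 : b^2 = a^2 + Real.pi) (h3 : 2*a ≤ θ) (h4 : θ ≤ 2*b) :
    (θ - 2*a)^2 + 2*θ*(2*a)*(1 - Real.cos (θ - 2*a)) ≤ 4*Real.pi^2 := by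
  have hπ3 : (3:ℝ) < Real.pi := Real.pi_gt_three
  have hπ4 : Real.pi < 3.15 := by linarith [Real.pi_lt_d2]
  have hp0 : 0 < Real.sqrt Real.pi := Real.sqrt_pos.2 (by linarith)
  have hp : (Real.sqrt Real.pi)^2 = Real.pi := Real.sq_sqrt (by linarith)
  have ha0 : 0 < a := lt_of_lt_of_le hp0 ha
  have hb0 : 0 < b := lt_trans ha0 hab
  have hdp : b - a ≤ Real.sqrt Real.pi/2 := by nlinarith
  have hp2 : Real.sqrt Real.pi ≤ 2 := by nlinarith
  have hd1 : b - a ≤ 1 := by linarith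
  have hΔ0 : 0 ≤ θ - 2*a := by linarith
  have hΔ2d : θ - 2*a ≤ 2*(b-a) := by linarith
  have hΔ2 : θ - 2*a ≤ 2 := by linarith
  have hcos : 1 - Real.cos (θ - 2*a) ≤ (θ-2*a)^2/2 - 7*(θ-2*a)^4/384 := cos_lb hΔ0 hΔ2
  have hid : 4*a*b*(b-a)^2 = Real.pi^2 - (b-a)^4 := by
    have hπeq : Real.pi = b^2 - a^2 := by linarith
    rw [hπeq]; ring
  have hΔsq : (θ-2*a)^2 ≤ 4 := by nlinarith
  have hfac : 0 ≤ (θ-2*a)^2/2 - 7*(θ-2*a)^4/384 := by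
    nlinarith [mul_nonneg (by linarith : (0:ℝ) ≤ 4 - (θ-2*a)^2) (sq_nonneg (θ-2*a))]
  have h8 : (θ-2*a)^2 + 2*θ*(2*a)*(1 - Real.cos (θ-2*a))
      ≤ (θ-2*a)^2 + (8*a*b)*((θ-2*a)^2/2 - 7*(θ-2*a)^4/384) := by
    have hθb : 2*θ*(2*a) ≤ 8*a*b := by nlinarith
    have hc1 : 0 ≤ 1 - Real.cos (θ-2*a) := by linarith [Real.cos_le_one (θ-2*a)]
    have habnn : (0:ℝ) ≤ 8*a*b := by positivity
    linarith [mul_le_mul hθb hcos hc1 habnn]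
  have h9 := step9 (A := 8*a*b) (Δ := θ-2*a) (d := b-a) (by positivity) hΔ0 hΔ2d hd1
  have h10 : (2*(b-a))^2 + (8*a*b)*((2*(b-a))^2/2 - 7*(2*(b-a))^4/384) ≤ 4*Real.pi^2 := by
    have hrw : (2*(b-a))^2 + (8*a*b)*((2*(b-a))^2/2 - 7*(2*(b-a))^4/384)
        = 4*(b-a)^2 + 4*(Real.pi^2 - (b-a)^4) - (7/12)*(b-a)^2*(Real.pi^2 - (b-a)^4) := by
      linear_combination (4 - (7/12)*(b-a)^2) * hid
    rw [hrw]
    exact step10 (by linarith) hd1 (by linarith)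
  linarith


lemma keyA {θ : ℝ} (h0 : 0 ≤ θ) (h1 : θ ≤ 2*Real.sqrt Real.pi) :
    (θ - 2*Real.sqrt Real.pi)^2 + 2*θ*(2*Real.sqrt Real.pi)*(1 - Real.cos (θ - 2*Real.sqrt Real.pi))
      ≤ 4*Real.pi^2 := by
  have hπ3 : (3:ℝ) < Real.pi := Real.pi_gt_three
  have hπ4 : Real.pi < 3.15 := by linarith [Real.pi_lt_d2]
  have hp0 : 0 < Real.sqrt Real.pi := Real.sqrt_pos.2 (by linarith)
  set p := Real.sqrt Real.pi with hpdef
  have hp : p^2 = Real.pi := Real.sq_sqrt (by linarith)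
  have hcos : 1 - Real.cos (θ - 2*p) ≤ (θ-2*p)^2/2 := by
    have := Real.one_sub_sq_div_two_le_cos (x := θ - 2*p)
    linarith
  have hc1 : 0 ≤ 1 - Real.cos (θ - 2*p) := by linarith [Real.cos_le_one (θ-2*p)]
  have h40 : 0 ≤ 2*θ*(2*p) := by nlinarith
  have h8 : 2*θ*(2*p)*(1 - Real.cos (θ-2*p)) ≤ 2*θ*(2*p)*((θ-2*p)^2/2) := by
    nlinarith
  have hpoly : (θ-2*p)^2 + 2*θ*(2*p)*((θ-2*p)^2/2) ≤ 4*Real.pi^2 := by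
    nlinarith [sq_nonneg (θ - 2*p), sq_nonneg θ, sq_nonneg (θ*(2*p-θ)), sq_nonneg ((2*p-θ) - 5/2), mul_nonneg h0 (sub_nonneg.2 h1)]
  linarith


lemma abs_le_of_sq_le {x B : ℝ} (hx : 0 ≤ x) (hB : 0 ≤ B) (h : x^2 ≤ B^2) : x ≤ B := by
  nlinarith

set_option maxHeartbeats 1600000 in
/-- for the Archimedes spiral pole selection
`p_k = r_k e^{iθ_k}`, `k ∈ {1,...,m/2}`, with `θ_k = 2√(πk)`,
`r_k = √(k/(m/2+1))`, every `z` in the open unit disk admits a pole `p_k` with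
`|z − p_k| < 4πc_m` and either `|p_k| ≤ |z|` or `k = 1`,
where `c_m = 1/(2√(π(m+2)/2))`. -/
theorem pole_selection_covering (m : ℕ) (hm : 0 < m) (hme : Even m)
    (z : ℂ) (hz : ‖z‖ < 1) :
    ∃ k ∈ Finset.Icc 1 (m / 2),
      ‖z - ((Real.sqrt ((k : ℝ) / ((m : ℝ) / 2 + 1)) : ℝ) : ℂ) *
            Complex.exp (Complex.I * ((2 * Real.sqrt (Real.pi * k) : ℝ) : ℂ))‖
          < 4 * Real.pi * (1 / (2 * Real.sqrt (Real.pi * ((m : ℝ) + 2) / 2))) ∧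
        (‖((Real.sqrt ((k : ℝ) / ((m : ℝ) / 2 + 1)) : ℝ) : ℂ) *
              Complex.exp (Complex.I * ((2 * Real.sqrt (Real.pi * k) : ℝ) : ℂ))‖
            ≤ ‖z‖ ∨ k = 1) := by
  obtain ⟨n, hmn0⟩ := hme
  have hmn : m = 2*n := by omega
  clear hmn0
  have hn1 : 1 ≤ n := by omega
  have hm2 : m / 2 = n := by omega
  have hπ3 : (3:ℝ) < Real.pi := Real.pi_gt_three
  have hπ0 : (0:ℝ) < Real.pi := by linarith
  have hN1 : (1:ℝ) ≤ (n:ℝ) := by exact_mod_cast hn1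
  have hmR : (m:ℝ) = 2*(n:ℝ) := by rw [hmn]; push_cast; ring
  set N : ℝ := (n:ℝ) with hNdef
  set c : ℝ := 1/(2*Real.sqrt (Real.pi*(N+1))) with hcdef
  have hsqpos : 0 < Real.sqrt (Real.pi*(N+1)) := Real.sqrt_pos.2 (by nlinarith)
  have hsqsq : (Real.sqrt (Real.pi*(N+1)))^2 = Real.pi*(N+1) := Real.sq_sqrt (by nlinarith)
  have hc0 : 0 < c := by positivity
  -- the constant in the goal equals 4πc
  have hconst : 4 * Real.pi * (1 / (2 * Real.sqrt (Real.pi * ((m : ℝ) + 2) / 2)))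
      = 4*Real.pi*c := by
    rw [hcdef, show Real.pi * ((m : ℝ) + 2) / 2 = Real.pi*(N+1) by rw [hmR]; ring]
  -- radius identity : √(K/(N+1)) = c * (2√(πK))
  have hck : ∀ K:ℝ, 0 ≤ K → Real.sqrt (K/(N+1)) = c * (2*Real.sqrt (Real.pi*K)) := by
    intro K hK
    have h1 : K/(N+1) = (Real.pi*K)/(Real.pi*(N+1)) :=
      (mul_div_mul_left K (N+1) (ne_of_gt hπ0)).symm
    rw [h1, Real.sqrt_div (by positivity) _, hcdef]
    rw [Real.sqrt_mul (le_of_lt hπ0), Real.sqrt_mul (le_of_lt hπ0)]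
    field_simp
  -- pole expression rewriting
  have hpole : ∀ k : ℕ, 1 ≤ k →
      ((Real.sqrt ((k : ℝ) / ((m : ℝ) / 2 + 1)) : ℝ) : ℂ) *
        Complex.exp (Complex.I * ((2 * Real.sqrt (Real.pi * k) : ℝ) : ℂ))
      = ((c * (2 * Real.sqrt (Real.pi * (k:ℝ))) : ℝ) : ℂ) *
        Complex.exp (Complex.I * ((2 * Real.sqrt (Real.pi * (k:ℝ)) : ℝ) : ℂ)) := by
    intro k hk
    have : (m:ℝ)/2 + 1 = N + 1 := by rw [hmR]; ring
    rw [this, hck (k:ℝ) (by positivity)]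
  clear_value N c
  -- abs of a pole
  have habspole : ∀ r t : ℝ, 0 ≤ r →
      ‖(r:ℂ) * Complex.exp (Complex.I * (t:ℂ))‖ = r := by
    intro r t hr
    rw [norm_mul, Complex.norm_real, Real.norm_eq_abs, mul_comm Complex.I (t:ℂ),
      Complex.norm_exp_ofReal_mul_I, mul_one, abs_of_nonneg hr]
  set ρ : ℝ := ‖z‖ with hρdef
  have hρ0 : 0 ≤ ρ := norm_nonneg z
  clear_value ρ
  set φ : ℝ := Complex.arg z with hφdef
  set j : ℤ := ⌊(ρ/c - φ)/(2*Real.pi)⌋ with hjdef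
  set θ : ℝ := φ + 2*Real.pi*j with hθdef
  have hθj : θ = φ + 2*Real.pi*j := hθdef
  have hθ1 : θ ≤ ρ/c := by
    have := Int.floor_le ((ρ/c - φ)/(2*Real.pi))
    rw [← hjdef] at this
    have h2 : (j:ℝ)*(2*Real.pi) ≤ ρ/c - φ := by
      rw [← le_div_iff₀ (by linarith : (0:ℝ) < 2*Real.pi)]; exact this
    rw [hθdef]; linarith
  have hθ2 : ρ/c < θ + 2*Real.pi := by
    have := Int.lt_floor_add_one ((ρ/c - φ)/(2*Real.pi))
    rw [← hjdef] at this
    have h2 : ρ/c - φ < ((j:ℝ)+1)*(2*Real.pi) := by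
      rw [← div_lt_iff₀ (by linarith : (0:ℝ) < 2*Real.pi)]; exact this
    rw [hθdef]; linarith
  have hcθρ : c*θ ≤ ρ := by
    have := (le_div_iff₀ hc0).1 hθ1; linarith
  have hρθ : ρ < c*θ + 2*Real.pi*c := by
    have := (div_lt_iff₀ hc0).1 hθ2; nlinarith
  -- polar form of z
  have hz_polar : ((ρ:ℝ):ℂ) * Complex.exp ((φ:ℂ)*Complex.I) = z := by
    rw [hρdef, hφdef]; exact Complex.norm_mul_exp_arg_mul_I z
  have hexp : Complex.exp (Complex.I*((θ:ℝ):ℂ)) = Complex.exp ((φ:ℂ)*Complex.I) := by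
    have h1 : Complex.I*((θ:ℝ):ℂ) = (φ:ℂ)*Complex.I + (j:ℂ)*(2*(Real.pi:ℂ)*Complex.I) := by
      rw [hθdef]; push_cast; ring
    rw [h1, Complex.exp_add, Complex.exp_int_mul_two_pi_mul_I, mul_one]
  clear_value θ
  clear_value j
  set w : ℂ := ((c*θ : ℝ):ℂ) * Complex.exp (Complex.I*((θ:ℝ):ℂ)) with hwdef
  clear_value w
  have hzw : ‖z - w‖ = ρ - c*θ := by
    have h1 : z - w = ((ρ - c*θ : ℝ):ℂ) * Complex.exp ((φ:ℂ)*Complex.I) := by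
      rw [hwdef, hexp, ← hz_polar]; push_cast; ring
    rw [h1, norm_mul, Complex.norm_real, Real.norm_eq_abs, Complex.norm_exp_ofReal_mul_I, mul_one,
      abs_of_nonneg (by linarith)]
  have hzwlt : ‖z - w‖ < 2*Real.pi*c := by rw [hzw]; linarith
  have hsqrtπ : (0:ℝ) < Real.sqrt Real.pi := Real.sqrt_pos.2 hπ0
  have hsπ : (Real.sqrt Real.pi)^2 = Real.pi := Real.sq_sqrt (le_of_lt hπ0)
  by_cases hcase : θ < 2*Real.sqrt Real.pi
  · -- case A : use k = 1
    refine ⟨1, by rw [Finset.mem_Icc]; omega, ?_, Or.inr rfl⟩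
    rw [hconst, hpole 1 le_rfl,
      show Real.pi * ((1:ℕ):ℝ) = Real.pi by norm_num]
    have hsle : Real.sqrt Real.pi ≤ Real.pi := by nlinarith
    by_cases hneg : θ < 0
    · -- ρ < 2πc ; |z - p₁| ≤ ρ + r₁
      have hρsmall : ρ < 2*Real.pi*c := by nlinarith
      have habs1 : ‖((c * (2 * Real.sqrt Real.pi) : ℝ) : ℂ) *
          Complex.exp (Complex.I * ((2 * Real.sqrt Real.pi : ℝ) : ℂ))‖
          = c * (2*Real.sqrt Real.pi) :=
          habspole _ _ (mul_nonneg (le_of_lt hc0) (by positivity))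
      calc ‖z - ((c * (2 * Real.sqrt Real.pi) : ℝ) : ℂ) *
            Complex.exp (Complex.I * ((2 * Real.sqrt Real.pi : ℝ) : ℂ))‖
          ≤ ‖z‖ + ‖((c * (2 * Real.sqrt Real.pi) : ℝ) : ℂ) *
            Complex.exp (Complex.I * ((2 * Real.sqrt Real.pi : ℝ) : ℂ))‖ := by
            exact norm_sub_le z _
        _ = ρ + c * (2*Real.sqrt Real.pi) := by rw [habs1, ← hρdef]
        _ < 2*Real.pi*c + c*(2*Real.pi) := by
            have h5 : c*Real.sqrt Real.pi ≤ c*Real.pi :=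
              mul_le_mul_of_nonneg_left hsle (le_of_lt hc0)
            linarith
        _ = 4*Real.pi*c := by ring
    · -- 0 ≤ θ < 2√π : triangle through w
      push_neg at hneg
      have hchordsq := abs_polar_sub (c*θ) (c*(2*Real.sqrt Real.pi)) θ (2*Real.sqrt Real.pi)
      have hkA := keyA hneg (le_of_lt hcase)
      have hfact : (c*θ - c*(2*Real.sqrt Real.pi))^2
            + 2*(c*θ)*(c*(2*Real.sqrt Real.pi))*(1 - Real.cos (θ - 2*Real.sqrt Real.pi))
          = c^2 * ((θ - 2*Real.sqrt Real.pi)^2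
            + 2*θ*(2*Real.sqrt Real.pi)*(1 - Real.cos (θ - 2*Real.sqrt Real.pi))) := by ring
      have hsqle : (‖w - ((c*(2*Real.sqrt Real.pi):ℝ):ℂ) *
          Complex.exp (Complex.I * ((2*Real.sqrt Real.pi : ℝ):ℂ))‖)^2 ≤ (2*Real.pi*c)^2 := by
        rw [hwdef, hchordsq, hfact]
        calc c^2 * ((θ - 2*Real.sqrt Real.pi)^2
              + 2*θ*(2*Real.sqrt Real.pi)*(1 - Real.cos (θ - 2*Real.sqrt Real.pi)))
            ≤ c^2 * (4*Real.pi^2) := by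
              exact mul_le_mul_of_nonneg_left hkA (sq_nonneg c)
          _ = (2*Real.pi*c)^2 := by ring
      have hchord : ‖w - ((c*(2*Real.sqrt Real.pi):ℝ):ℂ) *
          Complex.exp (Complex.I * ((2*Real.sqrt Real.pi : ℝ):ℂ))‖ ≤ 2*Real.pi*c :=
        abs_le_of_sq_le (norm_nonneg _)
          (le_of_lt (mul_pos (mul_pos (by linarith : (0:ℝ) < 2) hπ0) hc0)) hsqle
      have htri := norm_sub_le_norm_sub_add_norm_sub z w (((c*(2*Real.sqrt Real.pi):ℝ):ℂ) *
          Complex.exp (Complex.I * ((2*Real.sqrt Real.pi : ℝ):ℂ)))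
      have hfinal : ‖z - ((c*(2*Real.sqrt Real.pi):ℝ):ℂ) *
          Complex.exp (Complex.I * ((2*Real.sqrt Real.pi : ℝ):ℂ))‖ < 4*Real.pi*c := by
        calc ‖z - _‖ ≤ ‖z - w‖ + _ := htri
          _ < 2*Real.pi*c + 2*Real.pi*c := by linarith
          _ = 4*Real.pi*c := by ring
      exact hfinal
  · -- case B
    push_neg at hcase
    have hθ0 : 0 < θ := lt_of_lt_of_le (by positivity) hcase
    set k : ℕ := ⌊θ^2/(4*Real.pi)⌋₊ with hkdef
    clear_value k
    have hdiv0 : 0 ≤ θ^2/(4*Real.pi) := by positivity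
    have hk1 : 1 ≤ k := by
      rw [hkdef]
      apply Nat.le_floor
      rw [Nat.cast_one, le_div_iff₀ (by linarith : (0:ℝ) < 4*Real.pi)]
      nlinarith
    have hkθ : (k:ℝ) ≤ θ^2/(4*Real.pi) := by rw [hkdef]; exact Nat.floor_le hdiv0
    have hθk1 : θ^2/(4*Real.pi) < (k:ℝ)+1 := by
      have := Nat.lt_floor_add_one (θ^2/(4*Real.pi))
      rw [← hkdef] at this
      push_cast at this ⊢; linarith
    have hθub : θ < 2*Real.sqrt (Real.pi*(N+1)) := by
      have h2 : ρ/c < 1/c := by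
        rw [div_lt_div_iff₀ hc0 hc0]
        nlinarith
      have h3 : 1/c = 2*Real.sqrt (Real.pi*(N+1)) := by
        rw [hcdef, one_div_one_div]
      linarith
    have hkn : k ≤ n := by
      have h1 : θ^2 < 4*Real.pi*(N+1) := by
        have := hθub
        nlinarith
      have h2 : θ^2/(4*Real.pi) < (n:ℝ)+1 := by
        rw [div_lt_iff₀ (by linarith : (0:ℝ) < 4*Real.pi)]
        rw [hNdef] at h1; nlinarith
      have h3 : ⌊θ^2/(4*Real.pi)⌋₊ < n+1 := (Nat.floor_lt hdiv0).2 (by push_cast; exact h2)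
      rw [← hkdef] at h3
      omega
    set a : ℝ := Real.sqrt (Real.pi*(k:ℝ)) with hadef
    set b : ℝ := Real.sqrt (Real.pi*((k:ℝ)+1)) with hbdef
    have hk0R : (1:ℝ) ≤ (k:ℝ) := by exact_mod_cast hk1
    have ha2 : a^2 = Real.pi*(k:ℝ) := Real.sq_sqrt (by positivity)
    have hb2 : b^2 = a^2 + Real.pi := by
      rw [ha2, hbdef, Real.sq_sqrt (by positivity)]; ring
    have ha0 : 0 < a := Real.sqrt_pos.2 (by nlinarith)
    have hb0 : 0 < b := Real.sqrt_pos.2 (by nlinarith)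
    have hab : a < b := by nlinarith
    have hap : Real.sqrt Real.pi ≤ a := Real.sqrt_le_sqrt (by nlinarith)
    have haθ : 2*a ≤ θ := by
      have h1 : Real.pi*(k:ℝ) ≤ (θ/2)^2 := by
        rw [div_pow]
        rw [le_div_iff₀ (by norm_num : (0:ℝ) < 2^2)]
        have := (le_div_iff₀ (by linarith : (0:ℝ) < 4*Real.pi)).1 hkθ
        nlinarith
      have h2 : a ≤ θ/2 := by
        rw [hadef]
        calc Real.sqrt (Real.pi*(k:ℝ)) ≤ Real.sqrt ((θ/2)^2) := Real.sqrt_le_sqrt h1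
          _ = θ/2 := Real.sqrt_sq (by linarith)
      linarith
    have hθb : θ ≤ 2*b := by
      have h1 : (θ/2)^2 < Real.pi*((k:ℝ)+1) := by
        have := (div_lt_iff₀ (by linarith : (0:ℝ) < 4*Real.pi)).1 hθk1
        nlinarith
      have h2 : θ/2 < b := by
        rw [hbdef]
        exact (Real.lt_sqrt (by linarith)).2 h1
      linarith
    refine ⟨k, by rw [Finset.mem_Icc]; omega, ?_, Or.inl ?_⟩
    · -- distance bound
      rw [hconst, hpole k hk1, ← hadef]
      have hchordsq := abs_polar_sub (c*θ) (c*(2*a)) θ (2*a)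
      have hkB := keyB hap hab hb2 haθ hθb
      have hsqle : (‖w - ((c*(2*a):ℝ):ℂ) *
          Complex.exp (Complex.I * ((2*a : ℝ):ℂ))‖)^2 ≤ (2*Real.pi*c)^2 := by
        rw [hwdef, hchordsq]
        calc (c*θ - c*(2*a))^2 + 2*(c*θ)*(c*(2*a))*(1 - Real.cos (θ - 2*a))
            = c^2 * ((θ - 2*a)^2 + 2*θ*(2*a)*(1 - Real.cos (θ - 2*a))) := by ring
          _ ≤ c^2 * (4*Real.pi^2) := mul_le_mul_of_nonneg_left hkB (sq_nonneg c)
          _ = (2*Real.pi*c)^2 := by ring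
      have hchord : ‖w - ((c*(2*a):ℝ):ℂ) *
          Complex.exp (Complex.I * ((2*a : ℝ):ℂ))‖ ≤ 2*Real.pi*c :=
        abs_le_of_sq_le (norm_nonneg _)
          (le_of_lt (mul_pos (mul_pos (by linarith : (0:ℝ) < 2) hπ0) hc0)) hsqle
      have htri := norm_sub_le_norm_sub_add_norm_sub z w (((c*(2*a):ℝ):ℂ) *
          Complex.exp (Complex.I * ((2*a : ℝ):ℂ)))
      have hfinal : ‖z - ((c*(2*a):ℝ):ℂ) *
          Complex.exp (Complex.I * ((2*a : ℝ):ℂ))‖ < 4*Real.pi*c := by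
        calc ‖z - _‖ ≤ ‖z - w‖ + _ := htri
          _ < 2*Real.pi*c + 2*Real.pi*c := by linarith
          _ = 4*Real.pi*c := by ring
      exact hfinal
    · -- |p_k| ≤ |z|
      rw [hpole k hk1, habspole _ _ (mul_nonneg (le_of_lt hc0) (by positivity)), ← hadef]
      have h1 : c*(2*a) ≤ c*θ := mul_le_mul_of_nonneg_left haθ (le_of_lt hc0)
      calc c*(2*a) ≤ c*θ := h1
        _ ≤ ρ := hcθρ
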